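/- For every t > 0, the double series ∑_{m≥1} t^m ∑_{j≥0} (m)_j / (j! (j+m)^{m+1}) converges and equals ∫_0^∞ ( e^{t v/(e^v − 1)} − 1 ) dv, which is finite. -/

import Mathlib

open Real MeasureTheory Polynomial

/-- Pochhammer symbol `(a)_k = a (a+1) ⋯ (a+k-1)`. -/
noncomputable def poch (a : ℝ) (k : ℕ) : ℝ := (ascPochhammer ℝ k).eval a

open Set

namespace Stmt1Aux

lemma poch_eq (m j : ℕ) :
    poch ((m : ℝ) + 1) j = (j.factorial : ℝ) * ((m + j).choose j : ℝ) := by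
  have h : ((m : ℝ) + 1) = ((m + 1 : ℕ) : ℝ) := by push_cast; ring
  rw [poch, h, ← ascPochhammer_eval_cast, ascPochhammer_nat_eq_ascFactorial,
    Nat.ascFactorial_eq_factorial_mul_choose]
  push_cast
  ring

/-- The summand of the double series. -/
noncomputable def A (t : ℝ) (p : ℕ × ℕ) : ℝ :=
  t ^ (p.1 + 1) * poch ((p.1 : ℝ) + 1) p.2 /
    ((p.2.factorial : ℝ) * ((p.2 : ℝ) + (p.1 : ℝ) + 1) ^ (p.1 + 2))

lemma A_eq (t : ℝ) (m j : ℕ) :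
    A t (m, j) = t ^ (m + 1) * (((m + j).choose j : ℕ) : ℝ) /
      ((j : ℝ) + (m : ℝ) + 1) ^ (m + 2) := by
  have hj : (j.factorial : ℝ) ≠ 0 := Nat.cast_ne_zero.mpr j.factorial_ne_zero
  have hd : ((j : ℝ) + (m : ℝ) + 1) ^ (m + 2) ≠ 0 := by positivity
  simp only [A, poch_eq]
  field_simp

lemma A_nonneg {t : ℝ} (ht : 0 < t) (p : ℕ × ℕ) : 0 ≤ A t p := by
  obtain ⟨m, j⟩ := p
  rw [A_eq]
  positivity

lemma choose_symm' (m j : ℕ) : (m + j).choose j = (m + j).choose m := by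
  have h := Nat.choose_symm (n := m + j) (k := j) (Nat.le_add_left j m)
  simpa using h.symm

lemma choose_le (m j : ℕ) :
    (((m + j).choose j : ℕ) : ℝ) * (m.factorial : ℝ) ≤ ((j : ℝ) + (m : ℝ) + 1) ^ m := by
  have h2 : (m + j).choose m * m.factorial ≤ (m + j) ^ m := by
    calc (m + j).choose m * m.factorial = (m + j).descFactorial m := by
          rw [Nat.descFactorial_eq_factorial_mul_choose]; ring
      _ ≤ (m + j) ^ m := Nat.descFactorial_le_pow _ _
  calc (((m + j).choose j : ℕ) : ℝ) * m.factorial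
      = (((m + j).choose m * m.factorial : ℕ) : ℝ) := by rw [choose_symm']; push_cast; ring
    _ ≤ (((m + j) ^ m : ℕ) : ℝ) := by exact_mod_cast h2
    _ ≤ ((j : ℝ) + (m : ℝ) + 1) ^ m := by
        have : (((m + j) ^ m : ℕ) : ℝ) = ((m : ℝ) + j) ^ m := by push_cast; ring
        rw [this]
        apply pow_le_pow_left₀ (by positivity)
        linarith

lemma summable_A {t : ℝ} (ht : 0 < t) : Summable (A t) := by
  have hf : Summable (fun m : ℕ => t ^ (m + 1) / (m.factorial : ℝ)) := by
    have h := (Real.summable_pow_div_factorial t).mul_left t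
    refine h.congr fun n => ?_
    rw [pow_succ]
    ring
  have hg : Summable (fun j : ℕ => 1 / ((j : ℝ) + 1) ^ 2) := by
    have h := Real.summable_one_div_nat_pow.mpr (one_lt_two)
    have h2 := (summable_nat_add_iff (f := fun n : ℕ => 1 / (n : ℝ) ^ 2) 1).mpr h
    refine h2.congr fun n => ?_
    push_cast
    ring
  have hprod := hf.mul_of_nonneg hg (fun m => by positivity) (fun j => by positivity)
  refine Summable.of_nonneg_of_le (fun p => A_nonneg ht p) (fun p => ?_) hprod
  obtain ⟨m, j⟩ := p
  rw [A_eq]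
  have hD : (0 : ℝ) < (j : ℝ) + (m : ℝ) + 1 := by positivity
  have hm : (0 : ℝ) < (m.factorial : ℝ) := by exact_mod_cast m.factorial_pos
  have hC : (((m + j).choose j : ℕ) : ℝ) ≤ ((j : ℝ) + (m : ℝ) + 1) ^ m / (m.factorial : ℝ) := by
    rw [le_div_iff₀ hm]
    exact choose_le m j
  calc t ^ (m + 1) * (((m + j).choose j : ℕ) : ℝ) / ((j : ℝ) + (m : ℝ) + 1) ^ (m + 2)
      ≤ t ^ (m + 1) * (((j : ℝ) + (m : ℝ) + 1) ^ m / (m.factorial : ℝ)) /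
        ((j : ℝ) + (m : ℝ) + 1) ^ (m + 2) := by gcongr
    _ = t ^ (m + 1) / (m.factorial : ℝ) * (1 / ((j : ℝ) + (m : ℝ) + 1) ^ 2) := by
        rw [show m + 2 = m + 2 from rfl, pow_add]
        field_simp
        ring
    _ ≤ t ^ (m + 1) / (m.factorial : ℝ) * (1 / ((j : ℝ) + 1) ^ 2) := by
        have h1 : (0:ℝ) < ((j : ℝ) + 1) := by positivity
        gcongr <;> linarith

/-- Summand of the pointwise double-series expansion of the integrand. -/
noncomputable def g (t : ℝ) (p : ℕ × ℕ) (v : ℝ) : ℝ :=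
  t ^ (p.1 + 1) / ((p.1 + 1).factorial : ℝ) * ((p.1 + p.2).choose p.2 : ℝ) *
    (v ^ (p.1 + 1) * Real.exp (-((p.2 : ℝ) + p.1 + 1) * v))

lemma g_nonneg {t : ℝ} (ht : 0 < t) (p : ℕ × ℕ) {v : ℝ} (hv : 0 ≤ v) : 0 ≤ g t p v := by
  rw [g]
  positivity

lemma g_cont (t : ℝ) (p : ℕ × ℕ) : Continuous (g t p) := by
  unfold g
  fun_prop

lemma exp_v_sub_one_pos {v : ℝ} (hv : 0 < v) : 0 < Real.exp v - 1 := by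
  have : (1 : ℝ) < Real.exp v := Real.one_lt_exp_iff.mpr hv
  linarith

lemma hasSum_inner {t : ℝ} (ht : 0 < t) (m : ℕ) {v : ℝ} (hv : 0 < v) :
    HasSum (fun j => g t (m, j) v)
      ((t * v / (Real.exp v - 1)) ^ (m + 1) / ((m + 1).factorial : ℝ)) := by
  set x := Real.exp (-v) with hxdef
  have hx0 : 0 < x := Real.exp_pos _
  have hx1 : x < 1 := Real.exp_lt_one_iff.mpr (by linarith)
  have h1x : (0 : ℝ) < 1 - x := by linarith
  have hnorm : ‖x‖ < 1 := by rw [Real.norm_eq_abs, abs_of_pos hx0]; exact hx1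
  have hev : 0 < Real.exp v - 1 := exp_v_sub_one_pos hv
  have hx_eq : x * (Real.exp v - 1) = 1 - x := by
    rw [hxdef, mul_sub, ← Real.exp_add, mul_one]
    simp
  have key : t * v / (Real.exp v - 1) = t * v * x / (1 - x) := by
    rw [div_eq_div_iff hev.ne' h1x.ne']
    linear_combination (-(t * v)) * hx_eq
  have h := hasSum_choose_mul_geometric_of_norm_lt_one (𝕜 := ℝ) m hnorm
  have h2 := h.mul_left (t ^ (m + 1) / ((m + 1).factorial : ℝ) * (v ^ (m + 1) * x ^ (m + 1)))
  convert h2 using 1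
  · rfl
  · funext j
    have hc : ((j + m).choose m) = ((m + j).choose j) := by
      rw [add_comm j m, ← choose_symm' m j]
    have hexp : Real.exp (-((j : ℝ) + m + 1) * v) = x ^ (m + 1) * x ^ j := by
      rw [hxdef, ← pow_add, ← Real.exp_nat_mul]
      congr 1
      push_cast
      ring
    simp only [g]
    rw [hexp, hc]
    ring
  · rw [key]
    have hfac : ((m + 1).factorial : ℝ) ≠ 0 := Nat.cast_ne_zero.mpr (m + 1).factorial_ne_zero
    rw [div_pow, mul_pow, mul_pow]
    field_simp

lemma hasSum_outer (y : ℝ) :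
    HasSum (fun m : ℕ => y ^ (m + 1) / ((m + 1).factorial : ℝ)) (Real.exp y - 1) := by
  have h : HasSum (fun n : ℕ => y ^ n / (n.factorial : ℝ)) (Real.exp y) := by
    rw [Real.exp_eq_exp_ℝ]
    exact NormedSpace.expSeries_div_hasSum_exp y
  have h2 := (hasSum_nat_add_iff' (f := fun n : ℕ => y ^ n / (n.factorial : ℝ)) 1).mpr h
  simpa using h2

lemma tsum_g {t : ℝ} (ht : 0 < t) {v : ℝ} (hv : 0 < v) :
    ∑' p : ℕ × ℕ, ENNReal.ofReal (g t p v) =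
      ENNReal.ofReal (Real.exp (t * v / (Real.exp v - 1)) - 1) := by
  have hy : 0 ≤ t * v / (Real.exp v - 1) := by
    have := exp_v_sub_one_pos hv
    positivity
  have hprod : (∑' p : ℕ × ℕ, ENNReal.ofReal (g t p v)) =
      ∑' (m : ℕ) (j : ℕ), ENNReal.ofReal (g t (m, j) v) :=
    ENNReal.tsum_prod (f := fun m j => ENNReal.ofReal (g t (m, j) v))
  rw [hprod]
  have hinner : ∀ m : ℕ, (∑' j : ℕ, ENNReal.ofReal (g t (m, j) v)) =
      ENNReal.ofReal ((t * v / (Real.exp v - 1)) ^ (m + 1) / ((m + 1).factorial : ℝ)) := by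
    intro m
    rw [← ENNReal.ofReal_tsum_of_nonneg (fun j => g_nonneg ht _ hv.le)
      (hasSum_inner ht m hv).summable, (hasSum_inner ht m hv).tsum_eq]
  rw [tsum_congr hinner,
    ← ENNReal.ofReal_tsum_of_nonneg (fun m => by positivity)
      (hasSum_outer (t * v / (Real.exp v - 1))).summable,
    (hasSum_outer (t * v / (Real.exp v - 1))).tsum_eq]

lemma integrable_pow_exp (n : ℕ) {a : ℝ} (ha : 0 < a) :
    IntegrableOn (fun v : ℝ => v ^ n * Real.exp (-a * v)) (Ioi 0) := by
  have hs : (-1 : ℝ) < (n : ℕ) := by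
    have : (0 : ℝ) ≤ (n : ℝ) := Nat.cast_nonneg n
    linarith
  have h := integrableOn_rpow_mul_exp_neg_mul_rpow (s := (n : ℝ)) (p := 1) (b := a) hs one_pos ha
  refine h.congr_fun (fun x _ => ?_) measurableSet_Ioi
  dsimp only
  rw [Real.rpow_one, Real.rpow_natCast]

lemma integral_pow_exp (n : ℕ) {a : ℝ} (ha : 0 < a) :
    ∫ v in Ioi (0 : ℝ), v ^ n * Real.exp (-a * v) = (n.factorial : ℝ) / a ^ (n + 1) := by
  have h := Real.integral_rpow_mul_exp_neg_mul_Ioi (a := (n : ℝ) + 1) (r := a)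
    (by positivity) ha
  rw [show ((n : ℝ) + 1 - 1) = (n : ℝ) by ring] at h
  have h2 : ∫ v in Ioi (0 : ℝ), v ^ n * Real.exp (-a * v) =
      ∫ s in Ioi (0 : ℝ), s ^ ((n : ℝ)) * Real.exp (-(a * s)) := by
    refine setIntegral_congr_fun measurableSet_Ioi fun x _ => ?_
    rw [Real.rpow_natCast, neg_mul]
  rw [h2, h, Real.Gamma_nat_eq_factorial,
    show ((n : ℝ) + 1) = ((n + 1 : ℕ) : ℝ) by push_cast; ring, Real.rpow_natCast,
    one_div, inv_pow]
  ring

lemma lintegral_g {t : ℝ} (ht : 0 < t) (p : ℕ × ℕ) :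
    ∫⁻ v in Ioi (0 : ℝ), ENNReal.ofReal (g t p v) = ENNReal.ofReal (A t p) := by
  obtain ⟨m, j⟩ := p
  have ha : (0 : ℝ) < (j : ℝ) + m + 1 := by positivity
  have hfac : ((m + 1).factorial : ℝ) ≠ 0 := Nat.cast_ne_zero.mpr (m + 1).factorial_ne_zero
  have hint : IntegrableOn (fun v : ℝ => g t (m, j) v) (Ioi 0) := by
    have h : IntegrableOn (fun v : ℝ =>
        (t ^ (m + 1) / ((m + 1).factorial : ℝ) * ((m + j).choose j : ℝ)) *
          (v ^ (m + 1) * Real.exp (-((j : ℝ) + m + 1) * v))) (Ioi 0) :=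
      (integrable_pow_exp (m + 1) ha).const_mul _
    refine h.congr_fun (fun x _ => ?_) measurableSet_Ioi
    simp only [g]
  have hnn : 0 ≤ᵐ[volume.restrict (Ioi (0 : ℝ))] fun v => g t (m, j) v := by
    refine (ae_restrict_iff' measurableSet_Ioi).mpr
      (Filter.Eventually.of_forall fun v hv => g_nonneg ht _ (le_of_lt hv))
  rw [← ofReal_integral_eq_lintegral_ofReal hint hnn]
  congr 1
  have hpull : ∫ v in Ioi (0 : ℝ), g t (m, j) v =
      (t ^ (m + 1) / ((m + 1).factorial : ℝ) * ((m + j).choose j : ℝ)) *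
        ∫ v in Ioi (0 : ℝ), v ^ (m + 1) * Real.exp (-((j : ℝ) + m + 1) * v) := by
    rw [← integral_const_mul]
    rfl
  rw [hpull, integral_pow_exp (m + 1) ha, A_eq]
  field_simp

lemma lintegral_eq {t : ℝ} (ht : 0 < t) :
    ∫⁻ v in Ioi (0 : ℝ), ENNReal.ofReal (Real.exp (t * v / (Real.exp v - 1)) - 1) =
      ENNReal.ofReal (∑' p : ℕ × ℕ, A t p) := by
  have h1 : ∫⁻ v in Ioi (0 : ℝ), ENNReal.ofReal (Real.exp (t * v / (Real.exp v - 1)) - 1) =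
      ∫⁻ v in Ioi (0 : ℝ), ∑' p : ℕ × ℕ, ENNReal.ofReal (g t p v) := by
    refine setLIntegral_congr_fun measurableSet_Ioi
      (fun v hv => ?_)
    exact (tsum_g ht hv).symm
  rw [h1, lintegral_tsum (fun p => ((g_cont t p).measurable.ennreal_ofReal).aemeasurable),
    tsum_congr (fun p => lintegral_g ht p),
    ← ENNReal.ofReal_tsum_of_nonneg (fun p => A_nonneg ht p) (summable_A ht)]

end Stmt1Aux

open Stmt1Aux

/-- For `t > 0`, the double series `∑_{m ≥ 1} t^m ∑_{j ≥ 0} (m)_j / (j! (j+m)^{m+1})`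
(indexed below by `m + 1` with `m : ℕ`) converges and equals
`∫_0^∞ (e^{t v / (e^v - 1)} - 1) dv`, which is finite. -/
theorem stmt1 (t : ℝ) (ht : 0 < t) :
    (Summable fun p : ℕ × ℕ =>
      t ^ (p.1 + 1) * poch (p.1 + 1) p.2 /
        ((p.2.factorial : ℝ) * ((p.2 : ℝ) + (p.1 : ℝ) + 1) ^ (p.1 + 2))) ∧
    MeasureTheory.IntegrableOn
      (fun v : ℝ => Real.exp (t * v / (Real.exp v - 1)) - 1) (Set.Ioi 0) ∧
    (∑' (m : ℕ) (j : ℕ), t ^ (m + 1) * poch (m + 1) j /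
        ((j.factorial : ℝ) * ((j : ℝ) + (m : ℝ) + 1) ^ (m + 2))) =
      ∫ v in Set.Ioi (0 : ℝ), (Real.exp (t * v / (Real.exp v - 1)) - 1) := by
  have hSum : Summable (A t) := summable_A ht
  have hmeas : Measurable (fun v : ℝ => Real.exp (t * v / (Real.exp v - 1)) - 1) := by
    fun_prop
  have hnn : 0 ≤ᵐ[volume.restrict (Ioi (0 : ℝ))]
      fun v : ℝ => Real.exp (t * v / (Real.exp v - 1)) - 1 := by
    refine (ae_restrict_iff' measurableSet_Ioi).mpr
      (Filter.Eventually.of_forall fun v hv => ?_)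
    have hv' : (0 : ℝ) < v := hv
    have h1 := exp_v_sub_one_pos hv'
    have h2 : 0 ≤ t * v / (Real.exp v - 1) := by positivity
    have h3 := Real.one_le_exp h2
    simp only [Pi.zero_apply]
    linarith
  have hfin := lintegral_eq ht
  have hInt : IntegrableOn (fun v : ℝ => Real.exp (t * v / (Real.exp v - 1)) - 1) (Ioi 0) := by
    refine ⟨hmeas.aestronglyMeasurable, ?_⟩
    rw [hasFiniteIntegral_iff_ofReal hnn, hfin]
    exact ENNReal.ofReal_lt_top
  refine ⟨hSum, hInt, ?_⟩
  have hI : ∫ v in Ioi (0 : ℝ), (Real.exp (t * v / (Real.exp v - 1)) - 1) =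
      (∫⁻ v in Ioi (0 : ℝ),
        ENNReal.ofReal (Real.exp (t * v / (Real.exp v - 1)) - 1)).toReal :=
    integral_eq_lintegral_of_nonneg_ae hnn hmeas.aestronglyMeasurable
  rw [hI, hfin, ENNReal.toReal_ofReal (tsum_nonneg (fun p => A_nonneg ht p))]
  exact (Summable.tsum_prod' hSum (fun m => (summable_A ht).prod_factor m)).symm
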